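/- Let k be an even integer with k ≥ 4 and let d = (3k+4)/2. Then any two symmetric (d,k) circuit codes of length 4k+6 are isomorphic, i.e., there is a unique symmetric (d,k) circuit code of maximum length 4k+6 up to isomorphism of the hypercube I(d). -/

import Mathlib

lemma zmod_natCast_inj {H a b : ℕ} (ha : a < H) (hb : b < H)
    (h : ((a : ℕ) : ZMod H) = ((b : ℕ) : ZMod H)) : a = b := by
  haveI : NeZero H := ⟨by omega⟩
  have h2 := (ZMod.natCast_eq_natCast_iff a b H).mp h
  rwa [Nat.ModEq, Nat.mod_eq_of_lt ha, Nat.mod_eq_of_lt hb] at h2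

section Core

variable {c : ℕ}

private lemma cadd (u : ZMod (2*(c+c)+3)) (a b : ℕ) :
    u + ((a:ℕ) : ZMod (2*(c+c)+3)) + ((b:ℕ) : ZMod (2*(c+c)+3))
      = u + ((a+b : ℕ) : ZMod (2*(c+c)+3)) := by
  rw [add_assoc, ← Nat.cast_add]

private lemma cred (u : ZMod (2*(c+c)+3)) {a b : ℕ} (hab : a = 2*(c+c)+3 + b) :
    u + ((a:ℕ) : ZMod (2*(c+c)+3)) = u + ((b:ℕ) : ZMod (2*(c+c)+3)) := by
  rw [hab, Nat.cast_add, ZMod.natCast_self, zero_add]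

private lemma coff_inj {u : ZMod (2*(c+c)+3)} {a b : ℕ} (ha : a < 2*(c+c)+3)
    (hb : b < 2*(c+c)+3) (h : u + ((a:ℕ) : ZMod (2*(c+c)+3)) = u + ((b:ℕ) : ZMod (2*(c+c)+3))) :
    a = b :=
  zmod_natCast_inj ha hb (by exact add_left_cancel h)

lemma core_unique (hc : 2 ≤ c)
    (P : Finset (ZMod (2*(c+c)+3)))
    (hcard : P.card = c + 1)
    (h1 : ∀ p ∈ P, p + ((1:ℕ) : ZMod (2*(c+c)+3)) ∉ P)
    (h2 : ∀ p ∈ P, p + ((c+c+1:ℕ) : ZMod (2*(c+c)+3)) ∉ P)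
    (h4 : ∀ s : ZMod (2*(c+c)+3), s ∈ P ∨ s + ((1:ℕ) : ZMod (2*(c+c)+3)) ∈ P ∨
      s + ((c+c+2:ℕ) : ZMod (2*(c+c)+3)) ∈ P ∨ s + ((c+c+3:ℕ) : ZMod (2*(c+c)+3)) ∈ P) :
    ∃ r : ZMod (2*(c+c)+3),
      P = (Finset.range (c+1)).image (fun i => r + ((i+i : ℕ) : ZMod (2*(c+c)+3))) := by
  haveI : NeZero (2*(c+c)+3) := ⟨by omega⟩
  classical
  set n : ZMod (2*(c+c)+3) → ZMod (2*(c+c)+3) := fun p =>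
    if p + ((2:ℕ) : ZMod (2*(c+c)+3)) ∈ P then p + ((2:ℕ) : ZMod (2*(c+c)+3))
    else p + ((c+c+3:ℕ) : ZMod (2*(c+c)+3)) with hn
  -- membership
  have hmem : ∀ p ∈ P, n p ∈ P := by
    intro p hp
    by_cases h : p + ((2:ℕ) : ZMod (2*(c+c)+3)) ∈ P
    · simpa only [hn, if_pos h] using h
    · simp only [hn, if_neg h]
      rcases h4 (p + ((c+c+2:ℕ) : ZMod (2*(c+c)+3))) with h' | h' | h' | h'
      · exfalso
        have hne := h2 _ h'
        rw [cadd, cred p (show (c+c+2)+(c+c+1) = 2*(c+c)+3 + 0 by omega)] at hne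
        simp only [Nat.cast_zero, add_zero] at hne
        exact hne hp
      · rwa [cadd, show (c+c+2)+1 = c+c+3 by omega] at h'
      · exfalso
        rw [cadd, cred p (show (c+c+2)+(c+c+2) = 2*(c+c)+3 + 1 by omega)] at h'
        exact h1 p hp h'
      · exfalso
        apply h
        rwa [cadd, cred p (show (c+c+2)+(c+c+3) = 2*(c+c)+3 + 2 by omega)] at h'
  -- injectivity on P
  have hinj : ∀ p ∈ P, ∀ q ∈ P, n p = n q → p = q := by
    intro p hp q hq hpq
    by_cases h : p + ((2:ℕ) : ZMod (2*(c+c)+3)) ∈ P <;>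
      by_cases h' : q + ((2:ℕ) : ZMod (2*(c+c)+3)) ∈ P <;>
        simp only [hn, if_pos, if_neg, h, h', ite_true, ite_false] at hpq
    · exact add_right_cancel hpq
    · -- p + 2 = q + (c+c+3) : then q + (c+c+1) = p : contradiction with h2 q
      exfalso
      apply h2 q hq
      have : q + ((c+c+1:ℕ) : ZMod (2*(c+c)+3)) + ((2:ℕ) : ZMod (2*(c+c)+3))
          = p + ((2:ℕ) : ZMod (2*(c+c)+3)) := by
        rw [cadd, show (c+c+1)+2 = c+c+3 by omega, hpq]
      have := add_right_cancel this
      rwa [this]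
    · exfalso
      apply h2 p hp
      have : p + ((c+c+1:ℕ) : ZMod (2*(c+c)+3)) + ((2:ℕ) : ZMod (2*(c+c)+3))
          = q + ((2:ℕ) : ZMod (2*(c+c)+3)) := by
        rw [cadd, show (c+c+1)+2 = c+c+3 by omega, ← hpq]
      have := add_right_cancel this
      rwa [this]
    · exact add_right_cancel hpq
  -- image of P under n is P
  have himg : P.image n = P := by
    apply Finset.eq_of_subset_of_card_le
    · intro q hq
      rcases Finset.mem_image.mp hq with ⟨p, hp, rfl⟩
      exact hmem p hp
    · rw [Finset.card_image_of_injOn hinj]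
  -- sum identity
  have hsum : (∑ p ∈ P, (n p - p)) = (0 : ZMod (2*(c+c)+3)) := by
    rw [Finset.sum_sub_distrib]
    have : ∑ p ∈ P, n p = ∑ q ∈ P, q := by
      conv_rhs => rw [← himg]
      rw [Finset.sum_image hinj]
    rw [this, sub_self]
  -- split the sum by the step size
  have hsplit : (∑ p ∈ P, (n p - p))
      = ((P.filter (fun p => p + ((2:ℕ) : ZMod (2*(c+c)+3)) ∈ P)).card : ℕ) *
          ((2:ℕ) : ZMod (2*(c+c)+3))
        + ((P.filter (fun p => ¬ (p + ((2:ℕ) : ZMod (2*(c+c)+3)) ∈ P))).card : ℕ) *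
          ((c+c+3:ℕ) : ZMod (2*(c+c)+3)) := by
    rw [← Finset.sum_filter_add_sum_filter_not P (fun p => p + ((2:ℕ) : ZMod (2*(c+c)+3)) ∈ P)]
    congr 1
    · rw [Finset.sum_congr rfl (fun p hp => ?_), Finset.sum_const, nsmul_eq_mul]
      rcases Finset.mem_filter.mp hp with ⟨_, h⟩
      simp only [hn, if_pos h, add_sub_cancel_left]
    · rw [Finset.sum_congr rfl (fun p hp => ?_), Finset.sum_const, nsmul_eq_mul]
      rcases Finset.mem_filter.mp hp with ⟨_, h⟩
      simp only [hn, if_neg h, add_sub_cancel_left]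
  set b2 := (P.filter (fun p => p + ((2:ℕ) : ZMod (2*(c+c)+3)) ∈ P)).card with hb2
  set b3 := (P.filter (fun p => ¬ (p + ((2:ℕ) : ZMod (2*(c+c)+3)) ∈ P))).card with hb3
  have hbsum : b2 + b3 = c + 1 := by
    rw [hb2, hb3, Finset.card_filter_add_card_filter_not, hcard]
  have hball : b3 ≤ c + 1 := by omega
  -- conclude b3 = 1
  have hzero : ((b2 * 2 + b3 * (c+c+3) : ℕ) : ZMod (2*(c+c)+3)) = 0 := by
    rw [Nat.cast_add, Nat.cast_mul, Nat.cast_mul, ← hsplit, hsum]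
  have hb3cast : ((b3 : ℕ) : ZMod (2*(c+c)+3)) = ((1:ℕ) : ZMod (2*(c+c)+3)) := by
    have e3 : ((2*(c+c)+3 : ℕ) : ZMod (2*(c+c)+3)) = 0 := ZMod.natCast_self _
    have e2 : ((b2 + b3 : ℕ) : ZMod (2*(c+c)+3)) = ((c + 1 : ℕ) : ZMod (2*(c+c)+3)) := by
      rw [hbsum]
    push_cast at hzero e3 e2 ⊢
    linear_combination (-2 : ZMod (2*(c+c)+3))*hzero + 4*e2 + (((b3:ZMod (2*(c+c)+3)))+1)*e3
  have hb3one : b3 = 1 := zmod_natCast_inj (by omega) (by omega) hb3cast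
  -- the unique big-step element
  have hcard1 : (P.filter (fun p => ¬ (p + ((2:ℕ) : ZMod (2*(c+c)+3)) ∈ P))).card = 1 := by
    rw [← hb3]; exact hb3one
  rcases Finset.card_eq_one.mp hcard1 with ⟨pstar, hps⟩
  have hpsP : pstar ∈ P := by
    have : pstar ∈ P.filter (fun p => ¬ (p + ((2:ℕ) : ZMod (2*(c+c)+3)) ∈ P)) := by
      rw [hps]; exact Finset.mem_singleton_self _
    exact (Finset.mem_filter.mp this).1
  have hps2 : pstar + ((2:ℕ) : ZMod (2*(c+c)+3)) ∉ P := by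
    have : pstar ∈ P.filter (fun p => ¬ (p + ((2:ℕ) : ZMod (2*(c+c)+3)) ∈ P)) := by
      rw [hps]; exact Finset.mem_singleton_self _
    exact (Finset.mem_filter.mp this).2
  have hbig : ∀ p ∈ P, p ≠ pstar → p + ((2:ℕ) : ZMod (2*(c+c)+3)) ∈ P := by
    intro p hp hne
    by_contra hcon
    apply hne
    have hmemf : p ∈ P.filter (fun p => ¬ (p + ((2:ℕ) : ZMod (2*(c+c)+3)) ∈ P)) :=
      Finset.mem_filter.mpr ⟨hp, hcon⟩
    rw [hps] at hmemf
    exact Finset.mem_singleton.mp hmemf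
  have hr : pstar + ((c+c+3:ℕ) : ZMod (2*(c+c)+3)) ∈ P := by
    have := hmem pstar hpsP
    simpa only [hn, if_neg hps2] using this
  have hchain : ∀ i, i ≤ c →
      pstar + ((c+c+3:ℕ) : ZMod (2*(c+c)+3)) + ((i+i : ℕ) : ZMod (2*(c+c)+3)) ∈ P := by
    intro i
    induction i with
    | zero => intro _; simpa using hr
    | succ i ih =>
      intro hle
      have hprev := ih (by omega)
      have hne : pstar + ((c+c+3:ℕ) : ZMod (2*(c+c)+3)) + ((i+i : ℕ) : ZMod (2*(c+c)+3))
          ≠ pstar := by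
        intro he
        rw [cadd] at he
        have h0 : pstar + (((c+c+3)+(i+i) : ℕ) : ZMod (2*(c+c)+3))
            = pstar + ((0:ℕ) : ZMod (2*(c+c)+3)) := by
          simpa using he
        have := coff_inj (show (c+c+3)+(i+i) < 2*(c+c)+3 by omega) (by omega) h0
        omega
      have hnx := hbig _ hprev hne
      rwa [cadd, show (i+i)+2 = (i+1)+(i+1) by omega] at hnx
  refine ⟨pstar + ((c+c+3:ℕ) : ZMod (2*(c+c)+3)), ?_⟩
  have hinj2 : Set.InjOn (fun i => pstar + ((c+c+3:ℕ) : ZMod (2*(c+c)+3))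
      + ((i+i : ℕ) : ZMod (2*(c+c)+3))) (Finset.range (c+1)) := by
    intro i hi j hj hij
    simp only [Finset.coe_range, Set.mem_Iio, Finset.mem_coe, Finset.mem_range] at hi hj
    have := coff_inj (show i+i < 2*(c+c)+3 by omega) (show j+j < 2*(c+c)+3 by omega) hij
    omega
  symm
  apply Finset.eq_of_subset_of_card_le
  · intro v hv
    rcases Finset.mem_image.mp hv with ⟨i, hi, rfl⟩
    exact hchain i (Nat.lt_succ_iff.mp (Finset.mem_range.mp hi))
  · rw [hcard, Finset.card_image_of_injOn hinj2, Finset.card_range]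

end Core



/-- The graph of the `d`-dimensional hypercube: vertices are binary vectors of
length `d`, adjacent iff they differ in exactly one coordinate. -/
def hypercube (d : ℕ) : SimpleGraph (Fin d → Bool) where
  Adj x y := hammingDist x y = 1
  symm := ⟨fun x y (h : hammingDist x y = 1) => (hammingDist_comm y x).trans h⟩
  loopless := ⟨fun x (h : hammingDist x x = 1) => by simp [hammingDist_self] at h⟩

/-- Distance along a cycle of length `N` between positions `i` and `j`. -/
def cycDist {N : ℕ} (i j : ZMod N) : ℕ := min (i - j).val (j - i).val

/-- `x : ZMod N → (Fin d → Bool)` is a `(d,k)` circuit code of length `N`: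
a cycle in the hypercube `I(d)` satisfying the spread-`k` distance requirement. -/
structure IsCircuitCode (d k N : ℕ) (x : ZMod N → Fin d → Bool) : Prop where
  inj : Function.Injective x
  adj : ∀ i : ZMod N, (hypercube d).Adj (x i) (x (i + 1))
  spread : ∀ i j : ZMod N, min (cycDist i j) k ≤ (hypercube d).dist (x i) (x j)

/-- `τ` is the transition sequence of the cycle `x`: `τ i` is the unique
coordinate in which `x i` and `x (i+1)` differ. -/
def IsTransitionSeq {d N : ℕ} (x : ZMod N → Fin d → Bool) (τ : ZMod N → Fin d) : Prop :=
  ∀ (i : ZMod N) (j : Fin d), x (i + 1) j ≠ x i j ↔ j = τ i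

/-- The segment of `τ` of length `m` starting at position `start` is a bit run:
all of its entries are distinct. -/
def IsBitRun {d N : ℕ} (τ : ZMod N → Fin d) (start : ZMod N) (m : ℕ) : Prop :=
  ∀ a b : Fin m, τ (start + ((a : ℕ) : ZMod N)) = τ (start + ((b : ℕ) : ZMod N)) → a = b

/-- `δ(ω)`: the number of coordinates appearing an odd number of times in the
segment of `τ` of length `m` starting at `start`. -/
def segDelta {d N : ℕ} (τ : ZMod N → Fin d) (start : ZMod N) (m : ℕ) : ℕ :=
  (Finset.univ.filter fun c : Fin d =>
    Odd (Finset.univ.filter fun t : Fin m => τ (start + ((t : ℕ) : ZMod N)) = c).card).card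

section Analysis

variable {k d : ℕ}

private def cnt (τ : ZMod (4*k+6) → Fin d) (i : ZMod (4*k+6)) (m : ℕ) (c : Fin d) : ℕ :=
  ((Finset.range m).filter fun t => τ (i + ((t:ℕ) : ZMod (4*k+6))) = c).card

private def delta (τ : ZMod (4*k+6) → Fin d) (i : ZMod (4*k+6)) (m : ℕ) : ℕ :=
  (Finset.univ.filter fun c : Fin d => Odd (cnt τ i m c)).card

private lemma bool_ne_iff : ∀ (a b e : Bool), a ≠ b → ((a ≠ e) ↔ (b = e)) := by decide

private lemma cnt_succ (τ : ZMod (4*k+6) → Fin d) (i : ZMod (4*k+6)) (m : ℕ) (c : Fin d) :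
    cnt τ i (m+1) c = cnt τ i m c +
      (if τ (i + ((m:ℕ) : ZMod (4*k+6))) = c then 1 else 0) := by
  unfold cnt
  rw [Finset.range_add_one, Finset.filter_insert]
  by_cases h : τ (i + ((m:ℕ) : ZMod (4*k+6))) = c
  · rw [if_pos h, if_pos h, Finset.card_insert_of_notMem (by simp)]
  · rw [if_neg h, if_neg h, add_zero]

private lemma flip_iff {x : ZMod (4*k+6) → Fin d → Bool} {τ : ZMod (4*k+6) → Fin d}
    (hτ : IsTransitionSeq x τ) :
    ∀ (m : ℕ) (i : ZMod (4*k+6)) (c : Fin d),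
      (x (i + ((m:ℕ) : ZMod (4*k+6))) c ≠ x i c) ↔ Odd (cnt τ i m c) := by
  intro m
  induction m with
  | zero => intro i c; simp [cnt]
  | succ m ih =>
    intro i c
    have hcast : i + ((m+1 : ℕ) : ZMod (4*k+6)) = (i + ((m:ℕ) : ZMod (4*k+6))) + 1 := by
      push_cast; ring
    rw [cnt_succ, hcast]
    have hC := hτ (i + ((m:ℕ) : ZMod (4*k+6))) c
    by_cases hc : τ (i + ((m:ℕ) : ZMod (4*k+6))) = c
    · have hflip : x ((i + ((m:ℕ) : ZMod (4*k+6))) + 1) c ≠ x (i + ((m:ℕ) : ZMod (4*k+6))) c :=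
        hC.mpr hc.symm
      rw [if_pos hc, Nat.odd_add_one, ← ih i c]
      revert hflip
      generalize x ((i + ((m:ℕ) : ZMod (4*k+6))) + 1) c = A
      generalize x (i + ((m:ℕ) : ZMod (4*k+6))) c = B
      generalize x i c = E
      revert A B E
      decide
    · have hsame : x ((i + ((m:ℕ) : ZMod (4*k+6))) + 1) c = x (i + ((m:ℕ) : ZMod (4*k+6))) c := by
        by_contra h
        exact hc (hC.mp h).symm
      rw [if_neg hc, add_zero, hsame]
      exact ih i c

private lemma hamming_eq_delta {x : ZMod (4*k+6) → Fin d → Bool} {τ : ZMod (4*k+6) → Fin d}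
    (hτ : IsTransitionSeq x τ) (i : ZMod (4*k+6)) (m : ℕ) :
    hammingDist (x i) (x (i + ((m:ℕ) : ZMod (4*k+6)))) = delta τ i m := by
  unfold hammingDist delta
  congr 1
  apply Finset.filter_congr
  intro c _
  rw [ne_comm]
  exact (flip_iff hτ m i c)

private lemma walk_of_hamming : ∀ (n : ℕ) (y z : Fin d → Bool), hammingDist y z = n →
    ∃ w : (hypercube d).Walk y z, w.length = n := by
  intro n
  induction n with
  | zero =>
    intro y z h
    rw [hammingDist_eq_zero] at h
    subst h
    exact ⟨SimpleGraph.Walk.nil, rfl⟩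
  | succ n ih =>
    intro y z h
    have hne : ∃ c, y c ≠ z c := by
      by_contra hc
      push_neg at hc
      have : y = z := funext hc
      subst this
      rw [hammingDist_self] at h
      omega
    obtain ⟨c, hc⟩ := hne
    set y' := Function.update y c (z c) with hy'
    have hfil : (Finset.univ.filter fun i => y' i ≠ z i)
        = (Finset.univ.filter fun i => y i ≠ z i).erase c := by
      ext i
      simp only [Finset.mem_filter, Finset.mem_univ, true_and, Finset.mem_erase]
      by_cases hic : i = c
      · subst hic
        simp [hy', Function.update_self]
      · simp [hy', Function.update_of_ne hic, hic]
    have hham : hammingDist y' z = n := by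
      unfold hammingDist
      rw [hfil, Finset.card_erase_of_mem (by simp [hc]) ]
      unfold hammingDist at h
      omega
    have hadj : (hypercube d).Adj y y' := by
      show hammingDist y y' = 1
      unfold hammingDist
      have : (Finset.univ.filter fun i => y i ≠ y' i) = {c} := by
        ext i
        simp only [Finset.mem_filter, Finset.mem_univ, true_and, Finset.mem_singleton]
        by_cases hic : i = c
        · subst hic; simp [hy', Function.update_self, hc]
        · simp [hy', Function.update_of_ne hic, hic]
      rw [this, Finset.card_singleton]
    obtain ⟨w, hw⟩ := ih y' z hham
    exact ⟨SimpleGraph.Walk.cons hadj w, by simp [hw]⟩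

private lemma dist_le_hamming (y z : Fin d → Bool) :
    (hypercube d).dist y z ≤ hammingDist y z := by
  obtain ⟨w, hw⟩ := walk_of_hamming (hammingDist y z) y z rfl
  calc (hypercube d).dist y z ≤ w.length := SimpleGraph.dist_le w
  _ = _ := hw

private lemma key_ineq {x : ZMod (4*k+6) → Fin d → Bool} {τ : ZMod (4*k+6) → Fin d}
    (hsp : ∀ i j : ZMod (4*k+6), min (cycDist i j) k ≤ (hypercube d).dist (x i) (x j))
    (hτ : IsTransitionSeq x τ) (i : ZMod (4*k+6)) (m : ℕ) (hm : 0 < m) (hm2 : m < 4*k+6) :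
    min (min m (4*k+6 - m)) k ≤ delta τ i m := by
  haveI : NeZero (4*k+6) := ⟨by omega⟩
  have h1 := hsp i (i + ((m:ℕ) : ZMod (4*k+6)))
  have hval : ((m:ℕ) : ZMod (4*k+6)).val = m := ZMod.val_natCast_of_lt hm2
  have hcyc : cycDist i (i + ((m:ℕ) : ZMod (4*k+6))) = min (4*k+6 - m) m := by
    unfold cycDist
    have e1 : i - (i + ((m:ℕ) : ZMod (4*k+6))) = -((m:ℕ) : ZMod (4*k+6)) := by ring
    have e2 : i + ((m:ℕ) : ZMod (4*k+6)) - i = ((m:ℕ) : ZMod (4*k+6)) := by ring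
    rw [e1, e2, hval]
    congr 1
    rw [ZMod.neg_val]
    rw [if_neg (by
      intro h0
      rw [ZMod.natCast_eq_zero_iff] at h0
      have := Nat.le_of_dvd hm h0
      omega), hval]
  rw [hcyc, min_comm (4*k+6-m) m] at h1
  calc min (min m (4*k+6-m)) k ≤ (hypercube d).dist (x i) (x (i + ((m:ℕ) : ZMod (4*k+6)))) := h1
  _ ≤ hammingDist (x i) (x (i + ((m:ℕ) : ZMod (4*k+6)))) := dist_le_hamming _ _
  _ = delta τ i m := hamming_eq_delta hτ i m

private lemma sum_cnt (τ : ZMod (4*k+6) → Fin d) (i : ZMod (4*k+6)) (m : ℕ) :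
    ∑ c : Fin d, cnt τ i m c = m := by
  unfold cnt
  rw [← Finset.card_eq_sum_card_fiberwise (fun t _ => Finset.mem_univ _), Finset.card_range]

private lemma odd_filter_le {α : Type*} [Fintype α] [DecidableEq α] (f : α → ℕ) (S : ℕ)
    (hS : ∑ c, f c = S) (c₀ : α) (h2 : 2 ≤ f c₀) :
    (Finset.univ.filter fun c => Odd (f c)).card ≤ S - 2 := by
  set A := Finset.univ.filter fun c => Odd (f c) with hA
  have hcard : ∀ B : Finset α, B ⊆ A → B.card ≤ ∑ c ∈ B, f c := by
    intro B hB
    calc B.card = ∑ c ∈ B, 1 := by rw [Finset.sum_const, smul_eq_mul, mul_one]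
    _ ≤ ∑ c ∈ B, f c := Finset.sum_le_sum (fun c hc => by
        have := hB hc
        rw [hA, Finset.mem_filter] at this
        rcases this.2 with ⟨t, ht⟩
        omega)
  by_cases hc0 : c₀ ∈ A
  · have h3 : 3 ≤ f c₀ := by
      rw [hA, Finset.mem_filter] at hc0
      rcases hc0.2 with ⟨t, ht⟩
      omega
    have e1 : A.card = 1 + (A.erase c₀).card := by
      rw [Finset.card_erase_of_mem hc0]
      have : 1 ≤ A.card := Finset.card_pos.mpr ⟨c₀, hc0⟩
      omega
    have e2 : (A.erase c₀).card ≤ ∑ c ∈ A.erase c₀, f c :=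
      hcard _ (Finset.erase_subset _ _)
    have e3 : f c₀ + ∑ c ∈ A.erase c₀, f c = ∑ c ∈ A, f c :=
      Finset.add_sum_erase _ _ hc0
    have e4 : ∑ c ∈ A, f c ≤ S := by
      rw [← hS]
      exact Finset.sum_le_sum_of_subset (Finset.subset_univ _)
    omega
  · have e2 : A.card ≤ ∑ c ∈ A, f c := hcard _ (le_refl _)
    have e3 : ∑ c ∈ A, f c ≤ ∑ c ∈ Finset.univ.erase c₀, f c :=
      Finset.sum_le_sum_of_subset (fun a ha => Finset.mem_erase.mpr
        ⟨fun h => hc0 (h ▸ ha), Finset.mem_univ _⟩)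
    have e4 : f c₀ + ∑ c ∈ Finset.univ.erase c₀, f c = S := by
      rw [Finset.add_sum_erase _ _ (Finset.mem_univ c₀)]
      exact hS
    omega

private lemma equal_far {x : ZMod (4*k+6) → Fin d → Bool} {τ : ZMod (4*k+6) → Fin d}
    (hk4 : 4 ≤ k)
    (hsp : ∀ i j : ZMod (4*k+6), min (cycDist i j) k ≤ (hypercube d).dist (x i) (x j))
    (hτ : IsTransitionSeq x τ) (i : ZMod (4*k+6)) (m : ℕ) (hm : 1 ≤ m) (hm2 : m ≤ 4*k+4)
    (heq : τ (i + ((m:ℕ) : ZMod (4*k+6))) = τ i) :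
    k + 1 ≤ m := by
  by_contra hcon
  push_neg at hcon
  -- m ≤ k
  have hcnt2 : 2 ≤ cnt τ i (m+1) (τ i) := by
    have hsub : ({0, m} : Finset ℕ) ⊆ (Finset.range (m+1)).filter
        (fun t => τ (i + ((t:ℕ) : ZMod (4*k+6))) = τ i) := by
      intro t ht
      simp only [Finset.mem_insert, Finset.mem_singleton] at ht
      rcases ht with rfl | rfl
      · simp
      · simp only [Finset.mem_filter, Finset.mem_range]
        exact ⟨by omega, heq⟩
    have := Finset.card_le_card hsub
    rwa [Finset.card_insert_of_notMem (by simp; omega), Finset.card_singleton] at this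
  have hdel : delta τ i (m+1) ≤ (m+1) - 2 :=
    odd_filter_le _ _ (sum_cnt τ i (m+1)) (τ i) hcnt2
  have hkey := key_ineq hsp hτ i (m+1) (by omega) (by omega)
  have h5 : min (m+1) (4*k+6 - (m+1)) = m+1 := min_eq_left (by omega)
  rw [h5] at hkey
  rcases le_total (m+1) k with h6 | h6
  · rw [min_eq_left h6] at hkey; omega
  · rw [min_eq_right h6] at hkey; omega


private lemma zmod_natCast_inj' {H a b : ℕ} (ha : a < H) (hb : b < H)
    (h : ((a : ℕ) : ZMod H) = ((b : ℕ) : ZMod H)) : a = b := by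
  haveI : NeZero H := ⟨by omega⟩
  have h2 := (ZMod.natCast_eq_natCast_iff a b H).mp h
  rwa [Nat.ModEq, Nat.mod_eq_of_lt ha, Nat.mod_eq_of_lt hb] at h2

private lemma coff_inj' {H : ℕ} {u : ZMod H} {a b : ℕ} (ha : a < H)
    (hb : b < H) (h : u + ((a:ℕ) : ZMod H) = u + ((b:ℕ) : ZMod H)) : a = b :=
  zmod_natCast_inj' ha hb (by exact add_left_cancel h)

/-- the reduction map -/
private def cd (k' : ℕ) : ZMod (4*k'+6) →+* ZMod (2*k'+3) :=
  ZMod.castHom (⟨2, by ring⟩ : (2*k'+3) ∣ (4*k'+6)) (ZMod (2*k'+3))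

/-- the half-period sequence -/
private def sig (τ : ZMod (4*k+6) → Fin d) (u : ZMod (2*k+3)) : Fin d :=
  τ (((u.val : ℕ)) : ZMod (4*k+6))

private lemma cd_apply (i : ZMod (4*k+6)) :
    cd k i = ((i.val : ℕ) : ZMod (2*k+3)) := by
  haveI : NeZero (4*k+6) := ⟨by omega⟩
  rw [show cd k i = ZMod.castHom (⟨2, by ring⟩ : (2*k+3) ∣ (4*k+6)) (ZMod (2*k+3)) i from rfl,
    ZMod.castHom_apply, ← ZMod.natCast_val]

private lemma cd_natCast (t : ℕ) : cd k ((t : ℕ) : ZMod (4*k+6)) = ((t:ℕ) : ZMod (2*k+3)) :=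
  map_natCast _ t

private lemma cd_lift (u : ZMod (2*k+3)) : cd k (((u.val : ℕ)) : ZMod (4*k+6)) = u := by
  haveI : NeZero (2*k+3) := ⟨by omega⟩
  rw [cd_natCast]
  exact ZMod.natCast_rightInverse u

private lemma tau_eq_sig {τ : ZMod (4*k+6) → Fin d}
    (hsym : ∀ i : ZMod (4*k+6), τ (i + ((2*k+3 : ℕ) : ZMod (4*k+6))) = τ i)
    (i : ZMod (4*k+6)) : τ i = sig τ (cd k i) := by
  haveI : NeZero (4*k+6) := ⟨by omega⟩
  haveI : NeZero (2*k+3) := ⟨by omega⟩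
  rw [sig, cd_apply, ZMod.val_natCast]
  have hv : i.val < 4*k+6 := ZMod.val_lt i
  rcases lt_or_ge i.val (2*k+3) with h | h
  · rw [Nat.mod_eq_of_lt h, ZMod.natCast_rightInverse i]
  · have hmod : i.val % (2*k+3) = i.val - (2*k+3) := by
      rw [Nat.mod_eq_sub_mod h, Nat.mod_eq_of_lt (by omega)]
    rw [hmod]
    have hs := hsym (((i.val - (2*k+3) : ℕ)) : ZMod (4*k+6))
    rw [← Nat.cast_add, show (i.val - (2*k+3)) + (2*k+3) = i.val from by omega,
      ZMod.natCast_rightInverse i] at hs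
    exact hs

private def fib (σ : ZMod (2*k+3) → Fin d) (c : Fin d) : Finset (ZMod (2*k+3)) :=
  Finset.univ.filter fun v => σ v = c

private lemma cnt_eq_fib {τ : ZMod (4*k+6) → Fin d}
    (hsym : ∀ i : ZMod (4*k+6), τ (i + ((2*k+3 : ℕ) : ZMod (4*k+6))) = τ i)
    (i : ZMod (4*k+6)) (m : ℕ) (hm : m ≤ 2*k+3) (c : Fin d) :
    cnt τ i m c = ((fib (sig τ) c).filter fun v => (v - cd k i).val < m).card := by
  haveI : NeZero (2*k+3) := ⟨by omega⟩
  unfold cnt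
  apply Finset.card_bij (fun t _ => cd k i + ((t:ℕ) : ZMod (2*k+3)))
  · intro t ht
    simp only [Finset.mem_filter, Finset.mem_range] at ht
    rcases ht with ⟨ht1, ht2⟩
    rw [tau_eq_sig hsym, map_add, cd_natCast] at ht2
    simp only [Finset.mem_filter, fib, Finset.mem_univ, true_and]
    constructor
    · exact ht2
    · rw [add_sub_cancel_left, ZMod.val_natCast, Nat.mod_eq_of_lt (by omega)]
      exact ht1
  · intro t1 h1 t2 h2 heq
    simp only [Finset.mem_filter, Finset.mem_range] at h1 h2
    have := add_left_cancel heq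
    exact zmod_natCast_inj' (by omega) (by omega) this
  · intro v hv
    simp only [Finset.mem_filter, fib, Finset.mem_univ, true_and] at hv
    rcases hv with ⟨hv1, hv2⟩
    refine ⟨(v - cd k i).val, ?_, ?_⟩
    · simp only [Finset.mem_filter, Finset.mem_range]
      constructor
      · exact hv2
      · rw [tau_eq_sig hsym, map_add, cd_natCast, ZMod.natCast_rightInverse (v - cd k i),
          add_sub_cancel]
        exact hv1
    · rw [ZMod.natCast_rightInverse (v - cd k i), add_sub_cancel]

private lemma sig_fib {x : ZMod (4*k+6) → Fin d → Bool} {τ : ZMod (4*k+6) → Fin d}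
    (hk4 : 4 ≤ k)
    (hsp : ∀ i j : ZMod (4*k+6), min (cycDist i j) k ≤ (hypercube d).dist (x i) (x j))
    (hτ : IsTransitionSeq x τ)
    (hsym : ∀ i : ZMod (4*k+6), τ (i + ((2*k+3 : ℕ) : ZMod (4*k+6))) = τ i) :
    ∀ u v : ZMod (2*k+3), sig τ u = sig τ v →
      u = v ∨ v = u + ((k+1 : ℕ) : ZMod (2*k+3)) ∨ u = v + ((k+1 : ℕ) : ZMod (2*k+3)) := by
  haveI : NeZero (2*k+3) := ⟨by omega⟩
  have main : ∀ u v : ZMod (2*k+3), u.val < v.val → sig τ u = sig τ v →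
      v = u + ((k+1 : ℕ) : ZMod (2*k+3)) ∨ u = v + ((k+1 : ℕ) : ZMod (2*k+3)) := by
    intro u v hlt heq
    have hu : u.val < 2*k+3 := ZMod.val_lt u
    have hv : v.val < 2*k+3 := ZMod.val_lt v
    set m := v.val - u.val with hm
    -- first application : k+1 ≤ m
    have e1 : τ ((((u.val : ℕ)) : ZMod (4*k+6)) + ((m : ℕ) : ZMod (4*k+6)))
        = τ (((u.val : ℕ)) : ZMod (4*k+6)) := by
      rw [← Nat.cast_add, show u.val + m = v.val from by omega]
      exact heq.symm
    have f1 : k + 1 ≤ m := equal_far hk4 hsp hτ _ m (by omega) (by omega) e1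
    -- second application : k+1 ≤ 2k+3-m
    have e2 : τ ((((v.val : ℕ)) : ZMod (4*k+6)) + ((2*k+3-m : ℕ) : ZMod (4*k+6)))
        = τ (((v.val : ℕ)) : ZMod (4*k+6)) := by
      rw [← Nat.cast_add, show v.val + (2*k+3-m) = u.val + (2*k+3) from by omega,
        Nat.cast_add]
      rw [hsym ((u.val : ℕ) : ZMod (4*k+6))]
      exact heq
    have f2 : k + 1 ≤ 2*k+3-m := equal_far hk4 hsp hτ _ (2*k+3-m) (by omega) (by omega) e2
    -- m = k+1 or k+2
    have hm12 : m = k+1 ∨ m = k+2 := by omega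
    have hveq : v = u + ((m : ℕ) : ZMod (2*k+3)) := by
      rw [← ZMod.natCast_rightInverse v, ← ZMod.natCast_rightInverse u, ← Nat.cast_add]
      congr 1
      omega
    rcases hm12 with h12 | h12
    · left; rw [h12] at hveq; exact hveq
    · right
      rw [h12] at hveq
      rw [hveq, add_assoc, ← Nat.cast_add, show (k+2)+(k+1) = 2*k+3 from by omega,
        ZMod.natCast_self, add_zero]
  intro u v heq
  rcases lt_trichotomy u.val v.val with h | h | h
  · rcases main u v h heq with h1 | h1
    · exact Or.inr (Or.inl h1)
    · exact Or.inr (Or.inr h1)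
  · left
    have : u = ((u.val : ℕ) : ZMod (2*k+3)) := (ZMod.natCast_rightInverse u).symm
    rw [this, h]
    exact ZMod.natCast_rightInverse v
  · rcases main v u h heq.symm with h1 | h1
    · exact Or.inr (Or.inr h1)
    · exact Or.inr (Or.inl h1)


private lemma coff_ne {H : ℕ} (u : ZMod H) {a b : ℕ} (ha : a < H) (hb : b < H) (hab : a ≠ b) :
    u + ((a:ℕ) : ZMod H) ≠ u + ((b:ℕ) : ZMod H) := fun h => hab (coff_inj' ha hb h)

private lemma self_add_zero' {H : ℕ} (u : ZMod H) : u = u + ((0:ℕ) : ZMod H) := by simp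

section FibStruct

variable {σ : ZMod (2*k+3) → Fin d} (hk4 : 4 ≤ k)
  (hS : ∀ u v : ZMod (2*k+3), σ u = σ v →
      u = v ∨ v = u + ((k+1 : ℕ) : ZMod (2*k+3)) ∨ u = v + ((k+1 : ℕ) : ZMod (2*k+3)))

include hk4 hS

private lemma fib_pair (u : ZMod (2*k+3))
    (hu : σ (u + ((k+1:ℕ) : ZMod (2*k+3))) = σ u) :
    fib σ (σ u) = {u, u + ((k+1:ℕ) : ZMod (2*k+3))} := by
  ext v
  simp only [fib, Finset.mem_filter, Finset.mem_univ, true_and, Finset.mem_insert,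
    Finset.mem_singleton]
  constructor
  · intro hv
    rcases hS v u hv with h | h | h
    · exact Or.inl h
    · -- u = v + (k+1) ; compare v with u + (k+1)
      rcases hS v (u + ((k+1:ℕ) : ZMod (2*k+3))) (by rw [hv, hu]) with h2 | h2 | h2
      · exact Or.inr h2
      · -- u + (k+1) = v + (k+1)
        left
        exact add_right_cancel h2.symm
      · -- v = u + (k+1) + (k+1) and u = v + (k+1) : then u = u + 3(k+1)
        exfalso
        rw [h2, add_assoc, add_assoc, ← Nat.cast_add, ← Nat.cast_add] at h
        have h3 : u + ((0:ℕ) : ZMod (2*k+3)) = u + (((k+1)+((k+1)+(k+1)) : ℕ) : ZMod (2*k+3)) := by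
          rw [← h]; simp
        rw [show ((k+1)+((k+1)+(k+1)) : ℕ) = (2*k+3) + k from by omega, Nat.cast_add,
          ZMod.natCast_self, zero_add] at h3
        have := coff_inj' (show 0 < 2*k+3 from by omega) (show k < 2*k+3 from by omega) h3
        omega
    · exact Or.inr h
  · intro hv
    rcases hv with rfl | rfl
    · rfl
    · exact hu

private lemma fib_single (u : ZMod (2*k+3))
    (h1 : ¬ σ (u + ((k+1:ℕ) : ZMod (2*k+3))) = σ u)
    (h2 : ¬ σ (u + ((k+2:ℕ) : ZMod (2*k+3))) = σ u) :
    fib σ (σ u) = {u} := by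
  ext v
  simp only [fib, Finset.mem_filter, Finset.mem_univ, true_and, Finset.mem_singleton]
  constructor
  · intro hv
    rcases hS v u hv with h | h | h
    · exact h
    · -- h : u = v + (k+1), so v = u + (k+2)
      exfalso
      apply h2
      have hv2 : u + ((k+2:ℕ) : ZMod (2*k+3)) = v := by
        rw [h, add_assoc, ← Nat.cast_add, show (k+1)+(k+2) = 2*k+3 from by omega,
          ZMod.natCast_self, add_zero]
      rw [hv2]
      exact hv
    · exfalso
      apply h1
      rw [← h]
      exact hv
  · intro hv; rw [hv]

private lemma fib_card_le2 (c : Fin d) : (fib σ c).card ≤ 2 := by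
  rcases Finset.eq_empty_or_nonempty (fib σ c) with h | ⟨u, hu⟩
  · rw [h]; simp
  · have hσu : σ u = c := by
      simpa [fib, Finset.mem_filter] using hu
    by_cases ha : σ (u + ((k+1:ℕ) : ZMod (2*k+3))) = σ u
    · rw [← hσu, fib_pair hk4 hS u ha]
      exact Finset.card_insert_le _ _ |>.trans (by simp)
    · by_cases hb : σ (u + ((k+2:ℕ) : ZMod (2*k+3))) = σ u
      · -- u + (k+2) is the anchor
        have hb2 : σ (u + ((k+2:ℕ) : ZMod (2*k+3)) + ((k+1:ℕ) : ZMod (2*k+3)))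
            = σ (u + ((k+2:ℕ) : ZMod (2*k+3))) := by
          rw [add_assoc, ← Nat.cast_add, show (k+2)+(k+1) = 2*k+3 from by omega,
            ZMod.natCast_self, add_zero, hb]
        have := fib_pair hk4 hS (u + ((k+2:ℕ) : ZMod (2*k+3))) hb2
        rw [← hσu, ← hb, this]
        exact Finset.card_insert_le _ _ |>.trans (by simp)
      · rw [← hσu, fib_single hk4 hS u ha hb]
        simp

private lemma fib_two (c : Fin d) (hc : (fib σ c).card = 2) :
    ∃ v : ZMod (2*k+3), σ v = c ∧ σ (v + ((k+1:ℕ) : ZMod (2*k+3))) = σ v ∧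
      fib σ c = {v, v + ((k+1:ℕ) : ZMod (2*k+3))} := by
  have hne : (fib σ c).Nonempty := Finset.card_pos.mp (by omega)
  obtain ⟨u, hu⟩ := hne
  have hσu : σ u = c := by simpa [fib, Finset.mem_filter] using hu
  by_cases ha : σ (u + ((k+1:ℕ) : ZMod (2*k+3))) = σ u
  · exact ⟨u, hσu, ha, by rw [← hσu, fib_pair hk4 hS u ha]⟩
  · by_cases hb : σ (u + ((k+2:ℕ) : ZMod (2*k+3))) = σ u
    · have hb2 : σ (u + ((k+2:ℕ) : ZMod (2*k+3)) + ((k+1:ℕ) : ZMod (2*k+3)))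
          = σ (u + ((k+2:ℕ) : ZMod (2*k+3))) := by
        rw [add_assoc, ← Nat.cast_add, show (k+2)+(k+1) = 2*k+3 from by omega,
          ZMod.natCast_self, add_zero, hb]
      refine ⟨u + ((k+2:ℕ) : ZMod (2*k+3)), by rw [hb, hσu], hb2, ?_⟩
      rw [← hσu, ← hb, fib_pair hk4 hS _ hb2]
    · exfalso
      rw [← hσu, fib_single hk4 hS u ha hb] at hc
      simp at hc

end FibStruct


private lemma counting (hk4 : 4 ≤ k) (hd : 2*d = 3*k+4) {σ : ZMod (2*k+3) → Fin d}
    (hS : ∀ u v : ZMod (2*k+3), σ u = σ v →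
      u = v ∨ v = u + ((k+1 : ℕ) : ZMod (2*k+3)) ∨ u = v + ((k+1 : ℕ) : ZMod (2*k+3)))
    (hwin : k ≤ (Finset.univ.filter fun c : Fin d => Odd ((fib σ c).card)).card) :
    Function.Surjective σ ∧
    2 * (Finset.univ.filter fun u : ZMod (2*k+3) =>
        σ (u + ((k+1:ℕ) : ZMod (2*k+3))) = σ u).card = k + 2 ∧
    (Finset.univ.filter fun c : Fin d => (fib σ c).card = 1).card = k + 1 := by
  haveI : NeZero (2*k+3) := ⟨by omega⟩
  have hsum : ∑ c : Fin d, (fib σ c).card = 2*k+3 := by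
    have h := Finset.card_eq_sum_card_fiberwise
      (s := (Finset.univ : Finset (ZMod (2*k+3)))) (t := Finset.univ) (f := σ)
      (fun v _ => Finset.mem_univ _)
    rw [Finset.card_univ, ZMod.card] at h
    exact h.symm
  have hsplit : ∀ c ∈ (Finset.univ : Finset (Fin d)), (fib σ c).card =
      (if (fib σ c).card = 1 then 1 else 0) + 2*(if (fib σ c).card = 2 then 1 else 0) := by
    intro c _
    have h2 := fib_card_le2 hk4 hS c
    by_cases e1 : (fib σ c).card = 1
    · simp [e1]
    · by_cases e2 : (fib σ c).card = 2
      · simp [e1, e2]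
      · have : (fib σ c).card = 0 := by omega
        simp [e1, e2, this]
  rw [Finset.sum_congr rfl hsplit, Finset.sum_add_distrib, ← Finset.mul_sum,
    ← Finset.card_filter, ← Finset.card_filter] at hsum
  set S := (Finset.univ.filter fun c : Fin d => (fib σ c).card = 1).card with hs_def
  set D := (Finset.univ.filter fun c : Fin d => (fib σ c).card = 2).card with hD_def
  -- hwin gives S ≥ k
  have hflt : (Finset.univ.filter fun c : Fin d => Odd ((fib σ c).card))
      = (Finset.univ.filter fun c : Fin d => (fib σ c).card = 1) := by
    apply Finset.filter_congr
    intro c _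
    have h2 := fib_card_le2 hk4 hS c
    constructor
    · rintro ⟨t, ht⟩; omega
    · intro h; rw [h]; exact odd_one
  rw [hflt] at hwin
  -- S + D ≤ d
  have hSD : S + D ≤ d := by
    have hdis : Disjoint (Finset.univ.filter fun c : Fin d => (fib σ c).card = 1)
        (Finset.univ.filter fun c : Fin d => (fib σ c).card = 2) := by
      rw [Finset.disjoint_filter]
      intro c _ h1 h2
      omega
    calc S + D = ((Finset.univ.filter fun c : Fin d => (fib σ c).card = 1)
        ∪ (Finset.univ.filter fun c : Fin d => (fib σ c).card = 2)).card :=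
          (Finset.card_union_of_disjoint hdis).symm
    _ ≤ (Finset.univ : Finset (Fin d)).card := Finset.card_le_univ _
    _ = d := by rw [Finset.card_univ, Fintype.card_fin]
  -- anchors in bijection with doubled coordinates
  have hanch : (Finset.univ.filter fun u : ZMod (2*k+3) =>
      σ (u + ((k+1:ℕ) : ZMod (2*k+3))) = σ u).card = D := by
    rw [hD_def]
    apply Finset.card_bij (fun u _ => σ u)
    · intro u hu
      simp only [Finset.mem_filter, Finset.mem_univ, true_and] at hu ⊢
      rw [fib_pair hk4 hS u hu]
      apply Finset.card_pair
      nth_rewrite 1 [self_add_zero' u]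
      exact coff_ne u (by omega) (by omega) (by omega)
    · intro u hu u' hu' heq
      simp only [Finset.mem_filter, Finset.mem_univ, true_and] at hu hu'
      have hmem : u' ∈ fib σ (σ u) := by
        simp only [fib, Finset.mem_filter, Finset.mem_univ, true_and]
        exact heq.symm
      rw [fib_pair hk4 hS u hu] at hmem
      simp only [Finset.mem_insert, Finset.mem_singleton] at hmem
      rcases hmem with h | h
      · exact h.symm
      · exfalso
        -- u' = u + (k+1), both anchors
        have h1 : σ (u + ((2*k+2:ℕ) : ZMod (2*k+3))) = σ u := by
          have h3 := hu'
          rw [h, add_assoc, ← Nat.cast_add, show (k+1)+(k+1) = 2*k+2 from by omega] at h3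
          rw [h3, ← h, heq]
        rcases hS (u + ((2*k+2:ℕ) : ZMod (2*k+3))) u h1 with h2 | h2 | h2
        · nth_rewrite 2 [self_add_zero' u] at h2
          have := coff_inj' (a := 2*k+2) (b := 0) (by omega) (by omega) h2
          omega
        · rw [add_assoc, ← Nat.cast_add, show (2*k+2)+(k+1) = (2*k+3)+k from by omega,
            Nat.cast_add, ZMod.natCast_self, zero_add] at h2
          nth_rewrite 1 [self_add_zero' u] at h2
          have := coff_inj' (a := 0) (b := k) (by omega) (by omega) h2
          omega
        · have := coff_inj' (a := 2*k+2) (b := k+1) (by omega) (by omega) h2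
          omega
    · intro c hc
      simp only [Finset.mem_filter, Finset.mem_univ, true_and] at hc
      obtain ⟨v, hv1, hv2, _⟩ := fib_two hk4 hS c hc
      exact ⟨v, by simp only [Finset.mem_filter, Finset.mem_univ, true_and]; exact hv2, hv1⟩
  refine ⟨?_, ?_, ?_⟩
  · -- surjectivity
    have hcard : ((Finset.univ.filter fun c : Fin d => (fib σ c).card = 1)
        ∪ (Finset.univ.filter fun c : Fin d => (fib σ c).card = 2)).card = d := by
      have hdis : Disjoint (Finset.univ.filter fun c : Fin d => (fib σ c).card = 1)
          (Finset.univ.filter fun c : Fin d => (fib σ c).card = 2) := by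
        rw [Finset.disjoint_filter]
        intro c _ h1 h2
        omega
      rw [Finset.card_union_of_disjoint hdis, ← hs_def, ← hD_def]
      omega
    have huniv : (Finset.univ.filter fun c : Fin d => (fib σ c).card = 1)
        ∪ (Finset.univ.filter fun c : Fin d => (fib σ c).card = 2) = Finset.univ := by
      apply Finset.eq_univ_of_card
      rw [hcard, Fintype.card_fin]
    intro c
    have : c ∈ (Finset.univ.filter fun c : Fin d => (fib σ c).card = 1)
        ∪ (Finset.univ.filter fun c : Fin d => (fib σ c).card = 2) := by
      rw [huniv]; exact Finset.mem_univ c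
    have hpos : 0 < (fib σ c).card := by
      rcases Finset.mem_union.mp this with h | h <;>
        simp only [Finset.mem_filter, Finset.mem_univ, true_and] at h <;> omega
    obtain ⟨v, hv⟩ := Finset.card_pos.mp hpos
    exact ⟨v, by simpa [fib, Finset.mem_filter] using hv⟩
  · rw [hanch]; omega
  · omega


private lemma sub_val_expand (v w : ZMod (2*k+3)) :
    v = w + (((v - w).val : ℕ) : ZMod (2*k+3)) := by
  haveI : NeZero (2*k+3) := ⟨by omega⟩
  rw [ZMod.natCast_rightInverse (v - w), add_sub_cancel]

private lemma win_bound {x : ZMod (4*k+6) → Fin d → Bool} {τ : ZMod (4*k+6) → Fin d}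
    (hk4 : 4 ≤ k)
    (hsp : ∀ i j : ZMod (4*k+6), min (cycDist i j) k ≤ (hypercube d).dist (x i) (x j))
    (hτ : IsTransitionSeq x τ)
    (hsym : ∀ i : ZMod (4*k+6), τ (i + ((2*k+3 : ℕ) : ZMod (4*k+6))) = τ i) :
    k ≤ (Finset.univ.filter fun c : Fin d => Odd ((fib (sig τ) c).card)).card := by
  haveI : NeZero (2*k+3) := ⟨by omega⟩
  have hkey := key_ineq hsp hτ (0 : ZMod (4*k+6)) (2*k+3) (by omega) (by omega)
  rw [show 4*k+6 - (2*k+3) = 2*k+3 from by omega, min_self,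
    min_eq_right (show k ≤ 2*k+3 from by omega)] at hkey
  have hdel : delta τ (0 : ZMod (4*k+6)) (2*k+3)
      = (Finset.univ.filter fun c : Fin d => Odd ((fib (sig τ) c).card)).card := by
    unfold delta
    congr 1
    apply Finset.filter_congr
    intro c _
    rw [cnt_eq_fib hsym _ _ (le_refl _), map_zero]
    rw [Finset.filter_true_of_mem (fun v _ => by
      rw [sub_zero]; exact ZMod.val_lt v)]
  rwa [hdel] at hkey

private lemma anch_nonadj {x : ZMod (4*k+6) → Fin d → Bool} {τ : ZMod (4*k+6) → Fin d}
    (hk4 : 4 ≤ k)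
    (hsp : ∀ i j : ZMod (4*k+6), min (cycDist i j) k ≤ (hypercube d).dist (x i) (x j))
    (hτ : IsTransitionSeq x τ)
    (hsym : ∀ i : ZMod (4*k+6), τ (i + ((2*k+3 : ℕ) : ZMod (4*k+6))) = τ i)
    (u : ZMod (2*k+3))
    (hu : sig τ (u + ((k+1:ℕ) : ZMod (2*k+3))) = sig τ u)
    (hv : sig τ (u + ((1:ℕ) : ZMod (2*k+3)) + ((k+1:ℕ) : ZMod (2*k+3)))
      = sig τ (u + ((1:ℕ) : ZMod (2*k+3)))) : False := by
  haveI : NeZero (2*k+3) := ⟨by omega⟩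
  have hS := sig_fib hk4 hsp hτ hsym
  have hcc' : ¬ sig τ u = sig τ (u + ((1:ℕ) : ZMod (2*k+3))) := by
    intro h
    rcases hS u (u + ((1:ℕ) : ZMod (2*k+3))) h with h2 | h2 | h2
    · nth_rewrite 1 [self_add_zero' u] at h2
      have := coff_inj' (a := 0) (b := 1) (by omega) (by omega) h2
      omega
    · have := coff_inj' (a := 1) (b := k+1) (by omega) (by omega) h2
      omega
    · rw [add_assoc, ← Nat.cast_add] at h2
      nth_rewrite 1 [self_add_zero' u] at h2
      have := coff_inj' (a := 0) (b := 1+(k+1)) (by omega) (by omega) h2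
      omega
  have fibc := fib_pair hk4 hS u hu
  have fibc' := fib_pair hk4 hS _ hv
  have hcd : cd k (((u.val : ℕ)) : ZMod (4*k+6)) = u := cd_lift u
  have hcnt1 : cnt τ (((u.val : ℕ)) : ZMod (4*k+6)) (k+3) (sig τ u) = 2 := by
    rw [cnt_eq_fib hsym _ _ (by omega), hcd, fibc]
    rw [Finset.filter_true_of_mem ?_]
    · apply Finset.card_pair
      nth_rewrite 1 [self_add_zero' u]
      exact coff_ne u (by omega) (by omega) (by omega)
    · intro v hvv
      simp only [Finset.mem_insert, Finset.mem_singleton] at hvv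
      rcases hvv with rfl | rfl
      · rw [sub_self, ZMod.val_zero]; omega
      · rw [add_sub_cancel_left, ZMod.val_natCast_of_lt (by omega)]; omega
  have hcnt2 : cnt τ (((u.val : ℕ)) : ZMod (4*k+6)) (k+3) (sig τ (u + ((1:ℕ) : ZMod (2*k+3)))) = 2 := by
    rw [cnt_eq_fib hsym _ _ (by omega), hcd, fibc']
    rw [Finset.filter_true_of_mem ?_]
    · apply Finset.card_pair
      nth_rewrite 1 [self_add_zero' (u + ((1:ℕ) : ZMod (2*k+3)))]
      exact coff_ne _ (by omega) (by omega) (by omega)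
    · intro v hvv
      simp only [Finset.mem_insert, Finset.mem_singleton] at hvv
      rcases hvv with rfl | rfl
      · rw [add_sub_cancel_left, ZMod.val_natCast_of_lt (by omega)]; omega
      · rw [add_assoc, ← Nat.cast_add, add_sub_cancel_left,
          ZMod.val_natCast_of_lt (by omega)]; omega
  -- the delta bound
  have hbound : delta τ (((u.val : ℕ)) : ZMod (4*k+6)) (k+3) ≤ k - 1 := by
    unfold delta
    set A := Finset.univ.filter fun a : Fin d =>
      Odd (cnt τ (((u.val : ℕ)) : ZMod (4*k+6)) (k+3) a) with hA
    have hsub : A ⊆ (Finset.univ.erase (sig τ u)).erase (sig τ (u + ((1:ℕ) : ZMod (2*k+3)))) := by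
      intro a ha
      rw [hA, Finset.mem_filter] at ha
      refine Finset.mem_erase.mpr ⟨?_, Finset.mem_erase.mpr ⟨?_, Finset.mem_univ a⟩⟩
      · intro h; rw [h, hcnt2] at ha; have := Nat.odd_iff.mp ha.2; omega
      · intro h; rw [h, hcnt1] at ha; have := Nat.odd_iff.mp ha.2; omega
    have hA1 : A.card ≤ ∑ a ∈ A, cnt τ (((u.val : ℕ)) : ZMod (4*k+6)) (k+3) a := by
      calc A.card = ∑ a ∈ A, 1 := by rw [Finset.sum_const, smul_eq_mul, mul_one]
      _ ≤ _ := Finset.sum_le_sum (fun a ha => by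
        rw [hA, Finset.mem_filter] at ha
        rcases ha.2 with ⟨t, ht⟩
        omega)
    have hA2 : ∑ a ∈ A, cnt τ (((u.val : ℕ)) : ZMod (4*k+6)) (k+3) a
        ≤ ∑ a ∈ (Finset.univ.erase (sig τ u)).erase (sig τ (u + ((1:ℕ) : ZMod (2*k+3)))),
            cnt τ (((u.val : ℕ)) : ZMod (4*k+6)) (k+3) a :=
      Finset.sum_le_sum_of_subset hsub
    have e1 := Finset.add_sum_erase Finset.univ
      (cnt τ (((u.val : ℕ)) : ZMod (4*k+6)) (k+3)) (Finset.mem_univ (sig τ u))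
    have e2 := Finset.add_sum_erase (Finset.univ.erase (sig τ u))
      (cnt τ (((u.val : ℕ)) : ZMod (4*k+6)) (k+3))
      (Finset.mem_erase.mpr ⟨fun h => hcc' h.symm, Finset.mem_univ _⟩)
    have e3 := sum_cnt τ (((u.val : ℕ)) : ZMod (4*k+6)) (k+3)
    rw [e3] at e1
    rw [hcnt1] at e1
    rw [hcnt2] at e2
    omega
  have hkey := key_ineq hsp hτ (((u.val : ℕ)) : ZMod (4*k+6)) (k+3) (by omega) (by omega)
  rw [min_eq_left (show k+3 ≤ 4*k+6-(k+3) from by omega),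
    min_eq_right (show k ≤ k+3 from by omega)] at hkey
  omega


private lemma anch_window {x : ZMod (4*k+6) → Fin d → Bool} {τ : ZMod (4*k+6) → Fin d}
    (hk4 : 4 ≤ k)
    (hsp : ∀ i j : ZMod (4*k+6), min (cycDist i j) k ≤ (hypercube d).dist (x i) (x j))
    (hτ : IsTransitionSeq x τ)
    (hsym : ∀ i : ZMod (4*k+6), τ (i + ((2*k+3 : ℕ) : ZMod (4*k+6))) = τ i)
    (hS1 : (Finset.univ.filter fun c : Fin d => (fib (sig τ) c).card = 1).card = k + 1)
    (s : ZMod (2*k+3))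
    (hn1 : ¬ sig τ (s + ((k+1:ℕ) : ZMod (2*k+3))) = sig τ s)
    (hn2 : ¬ sig τ (s + ((1:ℕ) : ZMod (2*k+3)) + ((k+1:ℕ) : ZMod (2*k+3)))
      = sig τ (s + ((1:ℕ) : ZMod (2*k+3))))
    (hn3 : ¬ sig τ (s + ((k+2:ℕ) : ZMod (2*k+3)) + ((k+1:ℕ) : ZMod (2*k+3)))
      = sig τ (s + ((k+2:ℕ) : ZMod (2*k+3))))
    (hn4 : ¬ sig τ (s + ((k+3:ℕ) : ZMod (2*k+3)) + ((k+1:ℕ) : ZMod (2*k+3)))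
      = sig τ (s + ((k+3:ℕ) : ZMod (2*k+3)))) : False := by
  haveI : NeZero (2*k+3) := ⟨by omega⟩
  have hS := sig_fib hk4 hsp hτ hsym
  have hfib1 : fib (sig τ) (sig τ s) = {s} := by
    apply fib_single hk4 hS s hn1
    intro h
    apply hn3
    rw [add_assoc, ← Nat.cast_add, show (k+2)+(k+1) = 2*k+3 from by omega,
      ZMod.natCast_self, add_zero]
    exact h.symm
  have hfib2 : fib (sig τ) (sig τ (s + ((1:ℕ) : ZMod (2*k+3)))) = {s + ((1:ℕ) : ZMod (2*k+3))} := by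
    apply fib_single hk4 hS _ hn2
    intro h
    apply hn4
    rw [add_assoc, ← Nat.cast_add, show (k+3)+(k+1) = (2*k+3)+1 from by omega,
      Nat.cast_add, ZMod.natCast_self, zero_add]
    rw [add_assoc, ← Nat.cast_add, show (1:ℕ)+(k+2) = k+3 from by omega] at h
    exact h.symm
  have hc12 : ¬ sig τ s = sig τ (s + ((1:ℕ) : ZMod (2*k+3))) := by
    intro h
    rcases hS s (s + ((1:ℕ) : ZMod (2*k+3))) h with h2 | h2 | h2
    · nth_rewrite 1 [self_add_zero' s] at h2
      have := coff_inj' (a := 0) (b := 1) (by omega) (by omega) h2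
      omega
    · have := coff_inj' (a := 1) (b := k+1) (by omega) (by omega) h2
      omega
    · rw [add_assoc, ← Nat.cast_add] at h2
      nth_rewrite 1 [self_add_zero' s] at h2
      have := coff_inj' (a := 0) (b := 1+(k+1)) (by omega) (by omega) h2
      omega
  set w := s + ((2:ℕ) : ZMod (2*k+3)) with hw
  have hcd : cd k (((w.val : ℕ)) : ZMod (4*k+6)) = w := cd_lift w
  have hs_eq : s = w + ((2*k+1:ℕ) : ZMod (2*k+3)) := by
    rw [hw, add_assoc, ← Nat.cast_add, show (2:ℕ)+(2*k+1) = 2*k+3 from by omega,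
      ZMod.natCast_self, add_zero]
  have hs1_eq : s + ((1:ℕ) : ZMod (2*k+3)) = w + ((2*k+2:ℕ) : ZMod (2*k+3)) := by
    rw [hw, add_assoc, ← Nat.cast_add,
      show (2:ℕ)+(2*k+2) = (2*k+3)+1 from by omega, Nat.cast_add, ZMod.natCast_self, zero_add]
  have hcnt1 : cnt τ (((w.val : ℕ)) : ZMod (4*k+6)) (2*k+1) (sig τ s) = 0 := by
    rw [cnt_eq_fib hsym _ _ (by omega), hcd, hfib1, Finset.filter_singleton,
      if_neg ?_, Finset.card_empty]
    rw [hs_eq, add_sub_cancel_left, ZMod.val_natCast_of_lt (by omega)]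
    omega
  have hcnt2 : cnt τ (((w.val : ℕ)) : ZMod (4*k+6)) (2*k+1)
      (sig τ (s + ((1:ℕ) : ZMod (2*k+3)))) = 0 := by
    rw [cnt_eq_fib hsym _ _ (by omega), hcd, hfib2, Finset.filter_singleton,
      if_neg ?_, Finset.card_empty]
    rw [hs1_eq, add_sub_cancel_left, ZMod.val_natCast_of_lt (by omega)]
    omega
  have hmain : ∀ a : Fin d, Odd (cnt τ (((w.val : ℕ)) : ZMod (4*k+6)) (2*k+1) a) →
      (fib (sig τ) a).card = 1 ∧ a ≠ sig τ s ∧ a ≠ sig τ (s + ((1:ℕ) : ZMod (2*k+3))) := by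
    intro a ha
    have hne1 : a ≠ sig τ s := by
      intro h; rw [h, hcnt1] at ha; have := Nat.odd_iff.mp ha; omega
    have hne2 : a ≠ sig τ (s + ((1:ℕ) : ZMod (2*k+3))) := by
      intro h; rw [h, hcnt2] at ha; have := Nat.odd_iff.mp ha; omega
    refine ⟨?_, hne1, hne2⟩
    have hle := fib_card_le2 hk4 hS a
    by_cases h0 : (fib (sig τ) a).card = 0
    · exfalso
      rw [cnt_eq_fib hsym _ _ (by omega), hcd, Finset.card_eq_zero.mp h0,
        Finset.filter_empty, Finset.card_empty] at ha
      have := Nat.odd_iff.mp ha; omega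
    by_cases h2 : (fib (sig τ) a).card = 2
    · exfalso
      obtain ⟨v, hv1, hv2, hv3⟩ := fib_two hk4 hS a h2
      have hpass : ∀ y ∈ fib (sig τ) a, (y - w).val < 2*k+1 := by
        intro y hy
        have hyval : (y - w).val < 2*k+3 := ZMod.val_lt _
        by_contra hcon
        push_neg at hcon
        have hy_a : sig τ y = a := by
          simpa [fib, Finset.mem_filter] using hy
        have hy_exp := sub_val_expand y w
        rcases (show (y - w).val = 2*k+1 ∨ (y - w).val = 2*k+2 from by omega) with he | he
        · rw [he, ← hs_eq] at hy_exp
          rw [hy_exp] at hy_a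
          exact hne1 hy_a.symm
        · rw [he, ← hs1_eq] at hy_exp
          rw [hy_exp] at hy_a
          exact hne2 hy_a.symm
      have hfull : (fib (sig τ) a).filter (fun y => (y - w).val < 2*k+1) = fib (sig τ) a :=
        Finset.filter_true_of_mem hpass
      rw [cnt_eq_fib hsym _ _ (by omega), hcd, hfull, h2] at ha
      have := Nat.odd_iff.mp ha; omega
    omega
  -- the delta bound
  have hbound : delta τ (((w.val : ℕ)) : ZMod (4*k+6)) (2*k+1) ≤ k - 1 := by
    unfold delta
    have hsub : (Finset.univ.filter fun a : Fin d =>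
        Odd (cnt τ (((w.val : ℕ)) : ZMod (4*k+6)) (2*k+1) a)) ⊆
        (((Finset.univ.filter fun c : Fin d => (fib (sig τ) c).card = 1).erase
          (sig τ s)).erase (sig τ (s + ((1:ℕ) : ZMod (2*k+3))))) := by
      intro a ha
      rw [Finset.mem_filter] at ha
      obtain ⟨h1, h2, h3⟩ := hmain a ha.2
      exact Finset.mem_erase.mpr ⟨h3, Finset.mem_erase.mpr ⟨h2,
        Finset.mem_filter.mpr ⟨Finset.mem_univ a, h1⟩⟩⟩
    have hc1mem : sig τ s ∈ (Finset.univ.filter fun c : Fin d => (fib (sig τ) c).card = 1) :=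
      Finset.mem_filter.mpr ⟨Finset.mem_univ _, by rw [hfib1]; simp⟩
    have hc2mem : sig τ (s + ((1:ℕ) : ZMod (2*k+3))) ∈
        ((Finset.univ.filter fun c : Fin d => (fib (sig τ) c).card = 1).erase (sig τ s)) :=
      Finset.mem_erase.mpr ⟨fun h => hc12 h.symm,
        Finset.mem_filter.mpr ⟨Finset.mem_univ _, by rw [hfib2]; simp⟩⟩
    calc (Finset.univ.filter fun a : Fin d =>
        Odd (cnt τ (((w.val : ℕ)) : ZMod (4*k+6)) (2*k+1) a)).card
        ≤ _ := Finset.card_le_card hsub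
    _ = k - 1 := by
        rw [Finset.card_erase_of_mem hc2mem, Finset.card_erase_of_mem hc1mem, hS1]
        omega
  have hkey := key_ineq hsp hτ (((w.val : ℕ)) : ZMod (4*k+6)) (2*k+1) (by omega) (by omega)
  rw [min_eq_left (show 2*k+1 ≤ 4*k+6-(2*k+1) from by omega),
    min_eq_right (show k ≤ 2*k+1 from by omega)] at hkey
  omega


private lemma perCode (hk4 : 4 ≤ k) (hd : 2 * d = 3 * k + 4)
    {x : ZMod (4*k+6) → Fin d → Bool} {τ : ZMod (4*k+6) → Fin d}
    (hsp : ∀ i j : ZMod (4*k+6), min (cycDist i j) k ≤ (hypercube d).dist (x i) (x j))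
    (hτ : IsTransitionSeq x τ)
    (hsym : ∀ i : ZMod (4*k+6), τ (i + ((2*k+3 : ℕ) : ZMod (4*k+6))) = τ i) :
    (∀ i, τ i = sig τ (cd k i)) ∧
    Function.Surjective (sig τ) ∧
    (∀ u v : ZMod (2*k+3), sig τ u = sig τ v →
      u = v ∨ v = u + ((k+1:ℕ) : ZMod (2*k+3)) ∨ u = v + ((k+1:ℕ) : ZMod (2*k+3))) ∧
    (Finset.univ.filter fun u : ZMod (2*k+3) =>
        sig τ (u + ((k+1:ℕ) : ZMod (2*k+3))) = sig τ u).card = (k+2)/2 ∧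
    (∀ p ∈ (Finset.univ.filter fun u : ZMod (2*k+3) =>
        sig τ (u + ((k+1:ℕ) : ZMod (2*k+3))) = sig τ u),
      p + ((1:ℕ) : ZMod (2*k+3)) ∉ (Finset.univ.filter fun u : ZMod (2*k+3) =>
        sig τ (u + ((k+1:ℕ) : ZMod (2*k+3))) = sig τ u)) ∧
    (∀ p ∈ (Finset.univ.filter fun u : ZMod (2*k+3) =>
        sig τ (u + ((k+1:ℕ) : ZMod (2*k+3))) = sig τ u),
      p + ((k+1:ℕ) : ZMod (2*k+3)) ∉ (Finset.univ.filter fun u : ZMod (2*k+3) =>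
        sig τ (u + ((k+1:ℕ) : ZMod (2*k+3))) = sig τ u)) ∧
    (∀ s : ZMod (2*k+3),
      s ∈ (Finset.univ.filter fun u : ZMod (2*k+3) =>
        sig τ (u + ((k+1:ℕ) : ZMod (2*k+3))) = sig τ u) ∨
      s + ((1:ℕ) : ZMod (2*k+3)) ∈ (Finset.univ.filter fun u : ZMod (2*k+3) =>
        sig τ (u + ((k+1:ℕ) : ZMod (2*k+3))) = sig τ u) ∨
      s + ((k+2:ℕ) : ZMod (2*k+3)) ∈ (Finset.univ.filter fun u : ZMod (2*k+3) =>
        sig τ (u + ((k+1:ℕ) : ZMod (2*k+3))) = sig τ u) ∨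
      s + ((k+3:ℕ) : ZMod (2*k+3)) ∈ (Finset.univ.filter fun u : ZMod (2*k+3) =>
        sig τ (u + ((k+1:ℕ) : ZMod (2*k+3))) = sig τ u)) := by
  haveI : NeZero (2*k+3) := ⟨by omega⟩
  have hS := sig_fib hk4 hsp hτ hsym
  have hwin := win_bound hk4 hsp hτ hsym
  obtain ⟨hsurj, hanch, hS1⟩ := counting hk4 hd hS hwin
  refine ⟨fun i => tau_eq_sig hsym i, hsurj, hS, by omega, ?_, ?_, ?_⟩
  · -- no adjacent anchors
    intro p hp hq
    rw [Finset.mem_filter] at hp hq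
    exact anch_nonadj hk4 hsp hτ hsym p hp.2 hq.2
  · -- no anchors at distance k+1
    intro p hp hq
    rw [Finset.mem_filter] at hp hq
    have h1 : sig τ (p + ((2*k+2:ℕ) : ZMod (2*k+3))) = sig τ p := by
      have h3 := hq.2
      rw [add_assoc, ← Nat.cast_add, show (k+1)+(k+1) = 2*k+2 from by omega] at h3
      rw [h3, hp.2]
    rcases hS (p + ((2*k+2:ℕ) : ZMod (2*k+3))) p h1 with h2 | h2 | h2
    · nth_rewrite 2 [self_add_zero' p] at h2
      have := coff_inj' (a := 2*k+2) (b := 0) (by omega) (by omega) h2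
      omega
    · rw [add_assoc, ← Nat.cast_add, show (2*k+2)+(k+1) = (2*k+3)+k from by omega,
        Nat.cast_add, ZMod.natCast_self, zero_add] at h2
      nth_rewrite 1 [self_add_zero' p] at h2
      have := coff_inj' (a := 0) (b := k) (by omega) (by omega) h2
      omega
    · have := coff_inj' (a := 2*k+2) (b := k+1) (by omega) (by omega) h2
      omega
  · -- window condition
    intro s
    by_contra hcon
    push_neg at hcon
    obtain ⟨hn1, hn2, hn3, hn4⟩ := hcon
    rw [Finset.mem_filter] at hn1 hn2 hn3 hn4
    simp only [Finset.mem_univ, true_and] at hn1 hn2 hn3 hn4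
    exact anch_window hk4 hsp hτ hsym hS1 s hn1 hn2 hn3 hn4

end Analysis

/-- Lemma 4 (uniqueness): for even `k ≥ 4` and `d = (3k+4)/2`, any two symmetric
`(d,k)` circuit codes of length `4k+6` are isomorphic: their transition sequences
agree up to a cyclic shift and a permutation of coordinates. -/
theorem stmt_5 (k d : ℕ) (hk : Even k) (hk4 : 4 ≤ k) (hd : 2 * d = 3 * k + 4)
    (x x' : ZMod (4 * k + 6) → Fin d → Bool)
    (hx : IsCircuitCode d k (4 * k + 6) x) (hx' : IsCircuitCode d k (4 * k + 6) x')
    (τ τ' : ZMod (4 * k + 6) → Fin d)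
    (hτ : IsTransitionSeq x τ) (hτ' : IsTransitionSeq x' τ')
    (hsym : ∀ i : ZMod (4 * k + 6), τ (i + ((2 * k + 3 : ℕ) : ZMod (4 * k + 6))) = τ i)
    (hsym' : ∀ i : ZMod (4 * k + 6), τ' (i + ((2 * k + 3 : ℕ) : ZMod (4 * k + 6))) = τ' i) :
    ∃ (s : ZMod (4 * k + 6)) (π : Equiv.Perm (Fin d)),
      ∀ i : ZMod (4 * k + 6), τ' i = π (τ (i + s)) := by
  classical
  obtain ⟨c, rfl⟩ := hk
  have hc : 2 ≤ c := by omega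
  haveI : NeZero (2*(c+c)+3) := ⟨by omega⟩
  haveI : NeZero (4*(c+c)+6) := ⟨by omega⟩
  obtain ⟨hτσ, hsurj, hSf, hcard, hP1, hP2, hP4⟩ :=
    perCode (k := c+c) hk4 hd hx.spread hτ hsym
  obtain ⟨hτσ', hsurj', hSf', hcard', hP1', hP2', hP4'⟩ :=
    perCode (k := c+c) hk4 hd hx'.spread hτ' hsym'
  have hcardc : (Finset.univ.filter fun u : ZMod (2*(c+c)+3) =>
      sig τ (u + ((c+c+1:ℕ) : ZMod (2*(c+c)+3))) = sig τ u).card = c + 1 := by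
    rw [hcard]; omega
  have hcardc' : (Finset.univ.filter fun u : ZMod (2*(c+c)+3) =>
      sig τ' (u + ((c+c+1:ℕ) : ZMod (2*(c+c)+3))) = sig τ' u).card = c + 1 := by
    rw [hcard']; omega
  obtain ⟨r, hPr⟩ := core_unique hc _ hcardc hP1 hP2 hP4
  obtain ⟨r', hPr'⟩ := core_unique hc _ hcardc' hP1' hP2' hP4'
  set t : ZMod (2*(c+c)+3) := r - r' with ht
  have hshift : ∀ u : ZMod (2*(c+c)+3),
      ((u + t) ∈ (Finset.univ.filter fun u : ZMod (2*(c+c)+3) =>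
        sig τ (u + ((c+c+1:ℕ) : ZMod (2*(c+c)+3))) = sig τ u)) ↔
      (u ∈ (Finset.univ.filter fun u : ZMod (2*(c+c)+3) =>
        sig τ' (u + ((c+c+1:ℕ) : ZMod (2*(c+c)+3))) = sig τ' u)) := by
    intro u
    rw [hPr, hPr']
    simp only [Finset.mem_image, Finset.mem_range]
    constructor
    · rintro ⟨i, hi, hiq⟩
      exact ⟨i, hi, by linear_combination hiq + ht⟩
    · rintro ⟨i, hi, hiq⟩
      exact ⟨i, hi, by linear_combination hiq - ht⟩
  have hanchρ : ∀ u : ZMod (2*(c+c)+3),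
      (sig τ ((u + t) + ((c+c+1:ℕ) : ZMod (2*(c+c)+3))) = sig τ (u + t)) ↔
      (sig τ' (u + ((c+c+1:ℕ) : ZMod (2*(c+c)+3))) = sig τ' u) := by
    intro u
    have h1 := hshift u
    simp only [Finset.mem_filter, Finset.mem_univ, true_and] at h1
    exact h1
  have htrans : ∀ a b : ZMod (2*(c+c)+3),
      sig τ (a + t) = sig τ (b + t) → sig τ' a = sig τ' b := by
    intro a b h
    rcases hSf (a+t) (b+t) h with h2 | h2 | h2
    · rw [add_right_cancel h2]
    · have hb : b = a + ((c+c+1:ℕ) : ZMod (2*(c+c)+3)) := by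
        have h3 : b + t = (a + ((c+c+1:ℕ) : ZMod (2*(c+c)+3))) + t := by rw [h2]; ring
        exact add_right_cancel h3
      have hanch : sig τ ((a+t) + ((c+c+1:ℕ) : ZMod (2*(c+c)+3))) = sig τ (a+t) := by
        rw [← h2]; exact h.symm
      rw [hb, (hanchρ a).mp hanch]
    · have hb : a = b + ((c+c+1:ℕ) : ZMod (2*(c+c)+3)) := by
        have h3 : a + t = (b + ((c+c+1:ℕ) : ZMod (2*(c+c)+3))) + t := by rw [h2]; ring
        exact add_right_cancel h3
      have hanch : sig τ ((b+t) + ((c+c+1:ℕ) : ZMod (2*(c+c)+3))) = sig τ (b+t) := by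
        rw [← h2]; exact h
      rw [hb, (hanchρ b).mp hanch]
  have htrans' : ∀ a b : ZMod (2*(c+c)+3),
      sig τ' a = sig τ' b → sig τ (a + t) = sig τ (b + t) := by
    intro a b h
    rcases hSf' a b h with h2 | h2 | h2
    · rw [h2]
    · have hanch : sig τ' (a + ((c+c+1:ℕ) : ZMod (2*(c+c)+3))) = sig τ' a := by
        rw [← h2]; exact h.symm
      have h4 := (hanchρ a).mpr hanch
      rw [h2, show (a + ((c+c+1:ℕ) : ZMod (2*(c+c)+3))) + t
          = (a + t) + ((c+c+1:ℕ) : ZMod (2*(c+c)+3)) from by ring]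
      exact h4.symm
    · have hanch : sig τ' (b + ((c+c+1:ℕ) : ZMod (2*(c+c)+3))) = sig τ' b := by
        rw [← h2]; exact h
      have h4 := (hanchρ b).mpr hanch
      rw [show a + t = (b + t) + ((c+c+1:ℕ) : ZMod (2*(c+c)+3)) from by rw [h2]; ring]
      exact h4
  have hρsurj : Function.Surjective (fun u : ZMod (2*(c+c)+3) => sig τ (u + t)) := by
    intro cc
    obtain ⟨v, hv⟩ := hsurj cc
    exact ⟨v - t, by simpa [sub_add_cancel] using hv⟩
  set g := Function.surjInv hρsurj with hg
  set f : Fin d → Fin d := fun a => sig τ' (g a) with hf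
  have hginv : ∀ a, sig τ (g a + t) = a := fun a => Function.surjInv_eq hρsurj a
  have hfρ : ∀ u, f (sig τ (u + t)) = sig τ' u := by
    intro u
    exact htrans _ _ (hginv (sig τ (u + t)))
  have hfinj : Function.Injective f := by
    intro a b hab
    obtain ⟨ua, hua⟩ := hρsurj a
    obtain ⟨ub, hub⟩ := hρsurj b
    simp only at hua hub
    rw [← hua, ← hub, hfρ, hfρ] at hab
    rw [← hua, ← hub]
    exact htrans' _ _ hab
  have hfbij := Finite.injective_iff_bijective.mp hfinj
  refine ⟨((t.val : ℕ) : ZMod (4*(c+c)+6)), Equiv.ofBijective f hfbij, ?_⟩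
  intro i
  have e2 : τ (i + ((t.val:ℕ) : ZMod (4*(c+c)+6))) = sig τ (cd (c+c) i + t) := by
    rw [hτσ (i + ((t.val:ℕ) : ZMod (4*(c+c)+6))), map_add, cd_natCast,
      ZMod.natCast_rightInverse t]
  rw [hτσ' i, e2]
  show sig τ' (cd (c+c) i) = Equiv.ofBijective f hfbij (sig τ (cd (c+c) i + t))
  rw [Equiv.ofBijective_apply, hfρ]
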